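/- Let 0 < a < 1 and b a natural number with a·b ≥ 1. For every ε > 0 and every natural number n ≥ 1, the covering number of the unit ball B_W of the RKHS of the Weierstrass fractal kernel in C([−1,1]) satisfies 𝒞(ε, B_W) ≥ a^{n²/2} / (2ε²)^n. -/

import Mathlib

open Real Metric
open scoped ENNReal

/-- The covering number of a set `A` in a metric space: the minimal number (in `ℕ∞`) of balls
of radius `ε` needed to cover `A`. -/
noncomputable def coveringNumber {X : Type*} [PseudoMetricSpace X] (ε : ℝ) (A : Set X) : ℕ∞ :=
  sInf {n : ℕ∞ | ∃ t : Finset X, (t.card : ℕ∞) = n ∧ A ⊆ ⋃ c ∈ t, Metric.closedBall c ε}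

/-- The image in `C([-1,1])` of the unit ball of the RKHS of the Weierstrass fractal kernel:
continuous functions `f(x) = ∑ₙ a^(n/2)(cₙ cos(bⁿπx) + dₙ sin(bⁿπx))` with square-summable
coefficients satisfying `∑ₙ (cₙ² + dₙ²) ≤ 1`. -/
def weierstrassBall (a : ℝ) (b : ℕ) : Set C(Set.Icc (-1 : ℝ) 1, ℝ) :=
  {f | ∃ c d : ℕ → ℝ, Summable (fun n => c n ^ 2 + d n ^ 2) ∧
    (∑' n : ℕ, (c n ^ 2 + d n ^ 2)) ≤ 1 ∧
    ∀ x : Set.Icc (-1 : ℝ) 1, f x = ∑' n : ℕ, a ^ ((n : ℝ) / 2) *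
      (c n * Real.cos ((b : ℝ) ^ n * π * (x : ℝ)) +
        d n * Real.sin ((b : ℝ) ^ n * π * (x : ℝ)))}

/-! ### Auxiliary material for the proof -/

section Aux

open intervalIntegral MeasureTheory

lemma intCos (k : ℤ) : ∫ x in (-1:ℝ)..1, Real.cos (k * π * x) = if k = 0 then 2 else 0 := by
  rcases eq_or_ne k 0 with hk | hk
  · norm_num [hk]
  · have hc : (k : ℝ) * π ≠ 0 := mul_ne_zero (Int.cast_ne_zero.mpr hk) Real.pi_ne_zero
    have := intervalIntegral.integral_comp_mul_left (a := (-1:ℝ)) (b := 1)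
      (fun x => Real.cos x) hc
    simp only [mul_assoc] at this ⊢
    rw [this]
    have h1 : Real.sin (π * k) = 0 := by rw [mul_comm]; exact Real.sin_int_mul_pi k
    simp [hk, mul_comm, h1]

lemma intSin (k : ℤ) : ∫ x in (-1:ℝ)..1, Real.sin (k * π * x) = 0 := by
  rcases eq_or_ne k 0 with hk | hk
  · norm_num [hk]
  · have hc : (k : ℝ) * π ≠ 0 := mul_ne_zero (Int.cast_ne_zero.mpr hk) Real.pi_ne_zero
    have := intervalIntegral.integral_comp_mul_left (a := (-1:ℝ)) (b := 1)
      (fun x => Real.sin x) hc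
    simp only [mul_assoc] at this ⊢
    rw [this]
    simp [Real.cos_neg, mul_comm]

lemma intCosCos (p q : ℕ) (hp : 1 ≤ p) (hq : 1 ≤ q) :
    ∫ x in (-1:ℝ)..1, Real.cos (p * π * x) * Real.cos (q * π * x)
      = if p = q then 1 else 0 := by
  have hpt : ∀ x : ℝ, Real.cos (p * π * x) * Real.cos (q * π * x)
      = (Real.cos ((((p:ℤ) - q : ℤ) : ℝ) * π * x) + Real.cos ((((p:ℤ) + q : ℤ) : ℝ) * π * x)) / 2 := by
    intro x
    have h1 : (((p:ℤ) - q : ℤ) : ℝ) * π * x = p * π * x - q * π * x := by push_cast; ring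
    have h2 : (((p:ℤ) + q : ℤ) : ℝ) * π * x = p * π * x + q * π * x := by push_cast; ring
    rw [h1, h2, Real.cos_sub, Real.cos_add]; ring
  rw [intervalIntegral.integral_congr (fun x _ => hpt x)]
  have i1 : IntervalIntegrable (fun x => Real.cos ((((p:ℤ) - q : ℤ) : ℝ) * π * x)) MeasureTheory.volume (-1) 1 := by
    apply Continuous.intervalIntegrable; fun_prop
  have i2 : IntervalIntegrable (fun x => Real.cos ((((p:ℤ) + q : ℤ) : ℝ) * π * x)) MeasureTheory.volume (-1) 1 := by
    apply Continuous.intervalIntegrable; fun_prop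
  rw [intervalIntegral.integral_div, intervalIntegral.integral_add i1 i2, intCos, intCos]
  have hpq : (p:ℤ) + q ≠ 0 := by positivity
  have hq0 : q ≠ 0 := by omega
  rcases eq_or_ne p q with h | h
  · simp [h, hpq, hq0]
  · have : (p:ℤ) - q ≠ 0 := sub_ne_zero.mpr (by exact_mod_cast h)
    simp [h, this, hpq]

lemma intSinSin (p q : ℕ) (hp : 1 ≤ p) (hq : 1 ≤ q) :
    ∫ x in (-1:ℝ)..1, Real.sin (p * π * x) * Real.sin (q * π * x)
      = if p = q then 1 else 0 := by
  have hpt : ∀ x : ℝ, Real.sin (p * π * x) * Real.sin (q * π * x)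
      = (Real.cos ((((p:ℤ) - q : ℤ) : ℝ) * π * x) - Real.cos ((((p:ℤ) + q : ℤ) : ℝ) * π * x)) / 2 := by
    intro x
    have h1 : (((p:ℤ) - q : ℤ) : ℝ) * π * x = p * π * x - q * π * x := by push_cast; ring
    have h2 : (((p:ℤ) + q : ℤ) : ℝ) * π * x = p * π * x + q * π * x := by push_cast; ring
    rw [h1, h2, Real.cos_sub, Real.cos_add]; ring
  rw [intervalIntegral.integral_congr (fun x _ => hpt x)]
  have i1 : IntervalIntegrable (fun x => Real.cos ((((p:ℤ) - q : ℤ) : ℝ) * π * x)) MeasureTheory.volume (-1) 1 := by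
    apply Continuous.intervalIntegrable; fun_prop
  have i2 : IntervalIntegrable (fun x => Real.cos ((((p:ℤ) + q : ℤ) : ℝ) * π * x)) MeasureTheory.volume (-1) 1 := by
    apply Continuous.intervalIntegrable; fun_prop
  rw [intervalIntegral.integral_div, intervalIntegral.integral_sub i1 i2, intCos, intCos]
  have hpq : (p:ℤ) + q ≠ 0 := by positivity
  have hq0 : q ≠ 0 := by omega
  rcases eq_or_ne p q with h | h
  · simp [h, hpq, hq0]
  · have : (p:ℤ) - q ≠ 0 := sub_ne_zero.mpr (by exact_mod_cast h)
    simp [h, this, hpq]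

lemma intSinCos (p q : ℕ) :
    ∫ x in (-1:ℝ)..1, Real.sin (p * π * x) * Real.cos (q * π * x) = 0 := by
  have hpt : ∀ x : ℝ, Real.sin (p * π * x) * Real.cos (q * π * x)
      = (Real.sin ((((p:ℤ) + q : ℤ) : ℝ) * π * x) + Real.sin ((((p:ℤ) - q : ℤ) : ℝ) * π * x)) / 2 := by
    intro x
    have h1 : (((p:ℤ) - q : ℤ) : ℝ) * π * x = p * π * x - q * π * x := by push_cast; ring
    have h2 : (((p:ℤ) + q : ℤ) : ℝ) * π * x = p * π * x + q * π * x := by push_cast; ring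
    rw [h1, h2, Real.sin_sub, Real.sin_add]; ring
  rw [intervalIntegral.integral_congr (fun x _ => hpt x)]
  have i1 : IntervalIntegrable (fun x => Real.sin ((((p:ℤ) + q : ℤ) : ℝ) * π * x)) MeasureTheory.volume (-1) 1 := by
    apply Continuous.intervalIntegrable; fun_prop
  have i2 : IntervalIntegrable (fun x => Real.sin ((((p:ℤ) - q : ℤ) : ℝ) * π * x)) MeasureTheory.volume (-1) 1 := by
    apply Continuous.intervalIntegrable; fun_prop
  rw [intervalIntegral.integral_div, intervalIntegral.integral_add i1 i2, intSin, intSin]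
  norm_num

/-- The trigonometric system indexed by `Fin (2*n)`: even indices give cosines, odd indices
give sines, with frequency `b ^ (i/2)`. -/
noncomputable def wTrig (b n : ℕ) (i : Fin (2*n)) : ℝ → ℝ :=
  fun x => if i.val % 2 = 0 then Real.cos (((b ^ (i.val/2) : ℕ) : ℝ) * π * x)
    else Real.sin (((b ^ (i.val/2) : ℕ) : ℝ) * π * x)

lemma wTrig_continuous (b n : ℕ) (i : Fin (2*n)) : Continuous (wTrig b n i) := by
  unfold wTrig; split <;> fun_prop

lemma wTrig_ortho {b : ℕ} (hb : 2 ≤ b) {n : ℕ} (i j : Fin (2*n)) :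
    ∫ x in (-1:ℝ)..1, wTrig b n i x * wTrig b n j x = if i = j then 1 else 0 := by
  have hmono : ∀ {k l : ℕ}, b ^ k = b ^ l → k = l :=
    fun h => Nat.pow_right_injective hb h
  have hp : 1 ≤ b ^ (i.val/2) := Nat.one_le_pow _ _ (by omega)
  have hq : 1 ≤ b ^ (j.val/2) := Nat.one_le_pow _ _ (by omega)
  have hij : (i = j) ↔ (i.val / 2 = j.val / 2 ∧ i.val % 2 = j.val % 2) := by
    rw [Fin.ext_iff]; omega
  have hdiv : (b ^ (i.val/2) = b ^ (j.val/2)) ↔ i.val/2 = j.val/2 :=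
    ⟨fun h => hmono h, fun h => by rw [h]⟩
  rcases Nat.even_or_odd i.val with hi | hi <;> rcases Nat.even_or_odd j.val with hj | hj
  · have hi' : i.val % 2 = 0 := Nat.even_iff.mp hi
    have hj' : j.val % 2 = 0 := Nat.even_iff.mp hj
    have e : ∀ x : ℝ, wTrig b n i x * wTrig b n j x
        = Real.cos (((b ^ (i.val/2) : ℕ) : ℝ) * π * x) * Real.cos (((b ^ (j.val/2) : ℕ) : ℝ) * π * x) := by
      intro x; unfold wTrig; rw [if_pos hi', if_pos hj']
    rw [intervalIntegral.integral_congr (fun x _ => e x), intCosCos _ _ hp hq]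
    by_cases h : i = j
    · rw [if_pos h, if_pos (by rw [hdiv]; exact (hij.mp h).1)]
    · rw [if_neg h, if_neg (by rw [hdiv]; intro hc; exact h (hij.mpr ⟨hc, by omega⟩))]
  · have hi' : i.val % 2 = 0 := Nat.even_iff.mp hi
    have hj' : j.val % 2 = 1 := Nat.odd_iff.mp hj
    have e : ∀ x : ℝ, wTrig b n i x * wTrig b n j x
        = Real.sin (((b ^ (j.val/2) : ℕ) : ℝ) * π * x) * Real.cos (((b ^ (i.val/2) : ℕ) : ℝ) * π * x) := by
      intro x; unfold wTrig; rw [if_pos hi', if_neg (by omega)]; ring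
    rw [intervalIntegral.integral_congr (fun x _ => e x), intSinCos,
      if_neg (by rw [hij]; omega)]
  · have hi' : i.val % 2 = 1 := Nat.odd_iff.mp hi
    have hj' : j.val % 2 = 0 := Nat.even_iff.mp hj
    have e : ∀ x : ℝ, wTrig b n i x * wTrig b n j x
        = Real.sin (((b ^ (i.val/2) : ℕ) : ℝ) * π * x) * Real.cos (((b ^ (j.val/2) : ℕ) : ℝ) * π * x) := by
      intro x; unfold wTrig; rw [if_neg (by omega), if_pos hj']
    rw [intervalIntegral.integral_congr (fun x _ => e x), intSinCos,
      if_neg (by rw [hij]; omega)]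
  · have hi' : i.val % 2 = 1 := Nat.odd_iff.mp hi
    have hj' : j.val % 2 = 1 := Nat.odd_iff.mp hj
    have e : ∀ x : ℝ, wTrig b n i x * wTrig b n j x
        = Real.sin (((b ^ (i.val/2) : ℕ) : ℝ) * π * x) * Real.sin (((b ^ (j.val/2) : ℕ) : ℝ) * π * x) := by
      intro x; unfold wTrig; rw [if_neg (by omega), if_neg (by omega)]
    rw [intervalIntegral.integral_congr (fun x _ => e x), intSinSin _ _ hp hq]
    by_cases h : i = j
    · rw [if_pos h, if_pos (by rw [hdiv]; exact (hij.mp h).1)]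
    · rw [if_neg h, if_neg (by rw [hdiv]; intro hc; exact h (hij.mpr ⟨hc, by omega⟩))]

/-- Finite Bessel inequality on `[-1,1]` for an orthonormal system, by hand. -/
lemma bessel {m : ℕ} (e : Fin m → ℝ → ℝ) (he : ∀ i, Continuous (e i))
    (horth : ∀ i j, ∫ x in (-1:ℝ)..1, e i x * e j x = if i = j then 1 else 0)
    (h : ℝ → ℝ) (hh : Continuous h) :
    ∑ i, (∫ x in (-1:ℝ)..1, h x * e i x)^2 ≤ ∫ x in (-1:ℝ)..1, (h x)^2 := by
  set α : Fin m → ℝ := fun i => ∫ x in (-1:ℝ)..1, h x * e i x with hα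
  have expand : ∀ x : ℝ, (h x - ∑ i, α i * e i x)^2
      = (h x)^2 - 2 * ∑ i, α i * (h x * e i x) + ∑ i, ∑ j, (α i * α j) * (e i x * e j x) := by
    intro x
    rw [sub_sq, sq (∑ i, α i * e i x), Finset.sum_mul_sum]
    rw [Finset.mul_sum]
    congr 1
    · congr 1
      rw [Finset.mul_sum]
      exact Finset.sum_congr rfl (fun i _ => by ring)
    · exact Finset.sum_congr rfl (fun i _ => Finset.sum_congr rfl (fun j _ => by ring))
  have cS : Continuous fun x => ∑ i, α i * (h x * e i x) :=
    continuous_finset_sum _ (fun i _ => by have := he i; fun_prop)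
  have cD : Continuous fun x => ∑ i, ∑ j, (α i * α j) * (e i x * e j x) :=
    continuous_finset_sum _ (fun i _ => continuous_finset_sum _ (fun j _ => by
      have := he i; have := he j; fun_prop))
  have i1 : IntervalIntegrable (fun x => (h x)^2) volume (-1) 1 :=
    (by fun_prop : Continuous fun x => (h x)^2).intervalIntegrable _ _
  have i2 : IntervalIntegrable (fun x => 2 * ∑ i, α i * (h x * e i x)) volume (-1) 1 :=
    (by fun_prop : Continuous fun x => 2 * ∑ i, α i * (h x * e i x)).intervalIntegrable _ _
  have i3 : IntervalIntegrable (fun x => ∑ i, ∑ j, (α i * α j) * (e i x * e j x)) volume (-1) 1 :=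
    cD.intervalIntegrable _ _
  have key : ∫ x in (-1:ℝ)..1, (h x - ∑ i, α i * e i x)^2
      = (∫ x in (-1:ℝ)..1, (h x)^2) - ∑ i, (α i)^2 := by
    rw [intervalIntegral.integral_congr (fun x _ => expand x)]
    rw [intervalIntegral.integral_add (i1.sub i2) i3, intervalIntegral.integral_sub i1 i2]
    have e2 : (∫ x in (-1:ℝ)..1, 2 * ∑ i, α i * (h x * e i x)) = 2 * ∑ i, (α i)^2 := by
      rw [intervalIntegral.integral_const_mul]
      congr 1
      rw [intervalIntegral.integral_finset_sum
        (fun i _ => (by have := he i; fun_prop : Continuous fun x => α i * (h x * e i x)).intervalIntegrable _ _)]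
      exact Finset.sum_congr rfl (fun i _ => by
        rw [intervalIntegral.integral_const_mul, sq])
    have e3 : (∫ x in (-1:ℝ)..1, ∑ i, ∑ j, (α i * α j) * (e i x * e j x)) = ∑ i, (α i)^2 := by
      rw [intervalIntegral.integral_finset_sum
        (fun i _ => (continuous_finset_sum _ (fun j _ => by have := he i; have := he j; fun_prop) :
          Continuous fun x => ∑ j, (α i * α j) * (e i x * e j x)).intervalIntegrable _ _)]
      have : ∀ i : Fin m, (∫ x in (-1:ℝ)..1, ∑ j, (α i * α j) * (e i x * e j x)) = (α i)^2 := by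
        intro i
        rw [intervalIntegral.integral_finset_sum
          (fun j _ => (by have := he i; have := he j; fun_prop :
            Continuous fun x => (α i * α j) * (e i x * e j x)).intervalIntegrable _ _)]
        have : ∀ j : Fin m, (∫ x in (-1:ℝ)..1, (α i * α j) * (e i x * e j x))
            = if i = j then (α i)^2 else 0 := by
          intro j
          rw [intervalIntegral.integral_const_mul, horth i j]
          by_cases hij : i = j
          · subst hij; simp [sq]
          · simp [hij]
        rw [Finset.sum_congr rfl (fun j _ => this j), Finset.sum_ite_eq]
        simp
      rw [Finset.sum_congr rfl (fun i _ => this i)]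
    rw [e2, e3]; ring
  have pos : 0 ≤ ∫ x in (-1:ℝ)..1, (h x - ∑ i, α i * e i x)^2 :=
    intervalIntegral.integral_nonneg (by norm_num) (fun x _ => sq_nonneg _)
  rw [key] at pos
  linarith

/-- The diagonal linear map on Euclidean space. -/
noncomputable def diagMap (m : ℕ) (s : Fin m → ℝ) :
    EuclideanSpace ℝ (Fin m) →ₗ[ℝ] EuclideanSpace ℝ (Fin m) where
  toFun v := WithLp.toLp 2 (fun i => s i * v i)
  map_add' u v := by ext i; simp [mul_add]
  map_smul' c v := by ext i; simp; ring

lemma diagMap_det (m : ℕ) (s : Fin m → ℝ) : LinearMap.det (diagMap m s) = ∏ i, s i := by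
  rw [← LinearMap.det_toMatrix (EuclideanSpace.basisFun (Fin m) ℝ).toBasis]
  have : LinearMap.toMatrix (EuclideanSpace.basisFun (Fin m) ℝ).toBasis
      (EuclideanSpace.basisFun (Fin m) ℝ).toBasis (diagMap m s) = Matrix.diagonal s := by
    ext i j
    rw [LinearMap.toMatrix_apply]
    simp [diagMap, Matrix.diagonal, OrthonormalBasis.coe_toBasis_repr_apply,
      OrthonormalBasis.coe_toBasis, EuclideanSpace.basisFun_apply,
      EuclideanSpace.single_apply]
  rw [this, Matrix.det_diagonal]

lemma diag_image (m : ℕ) (s : Fin m → ℝ) (A : Set (EuclideanSpace ℝ (Fin m))) :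
    volume (diagMap m s '' A) = ENNReal.ofReal |∏ i, s i| * volume A := by
  rw [Measure.addHaar_image_linearMap, diagMap_det]

lemma euclid_sum_sq {m : ℕ} (v : EuclideanSpace ℝ (Fin m)) : ∑ i, (v i)^2 = ‖v‖^2 := by
  rw [EuclideanSpace.norm_eq, Real.sq_sqrt (by positivity)]
  exact Finset.sum_congr rfl (fun i _ => by rw [Real.norm_eq_abs, sq_abs])

lemma sum_range_two_mul (f : ℕ → ℝ) (n : ℕ) :
    ∑ i ∈ Finset.range (2*n), f i = ∑ k ∈ Finset.range n, (f (2*k) + f (2*k+1)) := by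
  induction n with
  | zero => simp
  | succ n ih =>
    have : 2 * (n+1) = (2*n + 1) + 1 := by ring
    rw [this, Finset.sum_range_succ, Finset.sum_range_succ, ih, Finset.sum_range_succ]
    ring

/-- The scaling coefficients: `√a ^ (i/2)`. -/
noncomputable def wSc (a : ℝ) (n : ℕ) (i : Fin (2*n)) : ℝ := Real.sqrt a ^ (i.val / 2)

lemma rpow_half_eq (a : ℝ) (ha : 0 < a) (k : ℕ) : a ^ ((k:ℝ)/2) = Real.sqrt a ^ k := by
  rw [show ((k:ℝ)/2) = (1/2) * k by ring, Real.rpow_mul ha.le,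
    Real.rpow_natCast (a ^ ((1:ℝ)/2)) k, Real.sqrt_eq_rpow]

/-- The finite trigonometric polynomial with coefficients `v i * √a^(i/2)`. -/
noncomputable def wPhi (a : ℝ) (b n : ℕ) (v : EuclideanSpace ℝ (Fin (2*n))) :
    C(Set.Icc (-1:ℝ) 1, ℝ) :=
  ⟨fun x => ∑ i, (v i * wSc a n i) * wTrig b n i (x : ℝ), by
    apply continuous_finset_sum
    intro i _
    exact continuous_const.mul ((wTrig_continuous b n i).comp continuous_subtype_val)⟩

/-- The coefficient-extraction map. -/
noncomputable def wL (b n : ℕ) (g : C(Set.Icc (-1:ℝ) 1, ℝ)) : EuclideanSpace ℝ (Fin (2*n)) :=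
  WithLp.toLp 2 fun i => ∫ x in (-1:ℝ)..1, g (Set.projIcc (-1) 1 (by norm_num) x) * wTrig b n i x

end Aux

section Aux2

open intervalIntegral MeasureTheory

lemma sum_div2 (n : ℕ) : ∑ j ∈ Finset.range (2*n), j/2 = n*(n-1) := by
  induction n with
  | zero => simp
  | succ n ih =>
    have h : 2 * (n+1) = (2*n + 1) + 1 := by ring
    rw [h, Finset.sum_range_succ, Finset.sum_range_succ, ih]
    rcases n with _ | k
    · simp
    · have e1 : (2*(k+1))/2 = k+1 := by omega
      have e2 : (2*(k+1)+1)/2 = k+1 := by omega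
      rw [e1, e2, Nat.succ_sub_one, Nat.succ_sub_one]
      ring

lemma wL_wPhi {b : ℕ} (hb : 2 ≤ b) (a : ℝ) (n : ℕ) (v : EuclideanSpace ℝ (Fin (2*n))) :
    wL b n (wPhi a b n v) = diagMap (2*n) (wSc a n) v := by
  ext i
  show (∫ x in (-1:ℝ)..1,
      wPhi a b n v (Set.projIcc (-1) 1 (by norm_num) x) * wTrig b n i x) = wSc a n i * v i
  have hEq : Set.EqOn
      (fun x => wPhi a b n v (Set.projIcc (-1) 1 (by norm_num) x) * wTrig b n i x)
      (fun x => ∑ j, ((v j * wSc a n j) * (wTrig b n j x * wTrig b n i x)))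
      (Set.uIcc (-1:ℝ) 1) := by
    intro x hx
    rw [Set.uIcc_of_le (by norm_num : (-1:ℝ) ≤ 1)] at hx
    have hproj : Set.projIcc (-1:ℝ) 1 (by norm_num) x = ⟨x, hx⟩ := Set.projIcc_of_mem _ hx
    simp only [hproj, wPhi, ContinuousMap.coe_mk, Finset.sum_mul]
    exact Finset.sum_congr rfl (fun j _ => by ring)
  rw [intervalIntegral.integral_congr hEq,
    intervalIntegral.integral_finset_sum
      (f := fun j x => (v j * wSc a n j) * (wTrig b n j x * wTrig b n i x)) (fun j _ =>
      ((continuous_const.mul ((wTrig_continuous b n j).mul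
        (wTrig_continuous b n i))).intervalIntegrable _ _))]
  have : ∀ j : Fin (2*n), (∫ x in (-1:ℝ)..1, (v j * wSc a n j) * (wTrig b n j x * wTrig b n i x))
      = if j = i then v j * wSc a n j else 0 := by
    intro j
    rw [intervalIntegral.integral_const_mul, wTrig_ortho hb j i]
    by_cases hji : j = i <;> simp [hji]
  rw [Finset.sum_congr rfl (fun j _ => this j), Finset.sum_ite_eq' Finset.univ i]
  simp [mul_comm]

lemma wL_dist {b : ℕ} (hb : 2 ≤ b) (n : ℕ) (g g' : C(Set.Icc (-1:ℝ) 1, ℝ)) :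
    dist (wL b n g) (wL b n g') ≤ Real.sqrt 2 * dist g g' := by
  have hd0 : 0 ≤ dist g g' := dist_nonneg
  set h : ℝ → ℝ := fun x => g (Set.projIcc (-1) 1 (by norm_num) x)
      - g' (Set.projIcc (-1) 1 (by norm_num) x) with hh
  have hc : Continuous h := by
    apply Continuous.sub
    · exact g.continuous.comp continuous_projIcc
    · exact g'.continuous.comp continuous_projIcc
  have hbd : ∀ x : ℝ, |h x| ≤ dist g g' := by
    intro x
    rw [dist_eq_norm]
    calc |h x| = ‖(g - g') (Set.projIcc (-1) 1 (by norm_num) x)‖ := by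
          rw [hh]; simp [Real.norm_eq_abs]
      _ ≤ ‖g - g'‖ := ContinuousMap.norm_coe_le_norm _ _
  have hcomp : ∀ i : Fin (2*n), wL b n g i - wL b n g' i
      = ∫ x in (-1:ℝ)..1, h x * wTrig b n i x := by
    intro i
    have e : (fun x => h x * wTrig b n i x)
        = fun x => g (Set.projIcc (-1) 1 (by norm_num) x) * wTrig b n i x
          - g' (Set.projIcc (-1) 1 (by norm_num) x) * wTrig b n i x := by
      funext x; rw [hh]; ring
    have cg : Continuous fun x : ℝ => (g (Set.projIcc (-1) 1 (by norm_num) x) : ℝ) :=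
      g.continuous.comp continuous_projIcc
    have cg' : Continuous fun x : ℝ => (g' (Set.projIcc (-1) 1 (by norm_num) x) : ℝ) :=
      g'.continuous.comp continuous_projIcc
    have i1 : IntervalIntegrable
        (fun x => g (Set.projIcc (-1) 1 (by norm_num) x) * wTrig b n i x) volume (-1) 1 :=
      (cg.mul (wTrig_continuous b n i)).intervalIntegrable _ _
    have i2 : IntervalIntegrable
        (fun x => g' (Set.projIcc (-1) 1 (by norm_num) x) * wTrig b n i x) volume (-1) 1 :=
      (cg'.mul (wTrig_continuous b n i)).intervalIntegrable _ _
    rw [e, intervalIntegral.integral_sub i1 i2]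
    rfl
  have hB := bessel (wTrig b n) (wTrig_continuous b n) (wTrig_ortho hb) h hc
  have hI : (∫ x in (-1:ℝ)..1, (h x)^2) ≤ 2 * (dist g g')^2 := by
    have hmono : ∀ x ∈ Set.Icc (-1:ℝ) 1, (h x)^2 ≤ (dist g g')^2 := by
      intro x _
      have := hbd x
      nlinarith [abs_nonneg (h x), sq_abs (h x)]
    calc (∫ x in (-1:ℝ)..1, (h x)^2) ≤ ∫ _x in (-1:ℝ)..1, (dist g g')^2 :=
          intervalIntegral.integral_mono_on (by norm_num)
            ((by fun_prop : Continuous fun x => (h x)^2).intervalIntegrable _ _)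
            (intervalIntegrable_const) hmono
      _ = 2 * (dist g g')^2 := by
          rw [intervalIntegral.integral_const]; norm_num
  rw [EuclideanSpace.dist_eq]
  have hsq : ∑ i, dist (wL b n g i) (wL b n g' i) ^ 2
      = ∑ i, (∫ x in (-1:ℝ)..1, h x * wTrig b n i x)^2 := by
    refine Finset.sum_congr rfl (fun i _ => ?_)
    rw [Real.dist_eq, sq_abs, hcomp i]
  rw [hsq]
  calc Real.sqrt (∑ i, (∫ x in (-1:ℝ)..1, h x * wTrig b n i x)^2)
      ≤ Real.sqrt (2 * (dist g g')^2) := Real.sqrt_le_sqrt (hB.trans hI)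
    _ = Real.sqrt 2 * dist g g' := by
        rw [Real.sqrt_mul (by norm_num), Real.sqrt_sq hd0]

lemma wPhi_mem {a : ℝ} (ha0 : 0 < a) (b n : ℕ) (v : EuclideanSpace ℝ (Fin (2*n)))
    (hv : ‖v‖ ≤ 1) : wPhi a b n v ∈ weierstrassBall a b := by
  classical
  set c : ℕ → ℝ := fun k => if h : 2*k < 2*n then v ⟨2*k, h⟩ else 0 with hc
  set d : ℕ → ℝ := fun k => if h : 2*k+1 < 2*n then v ⟨2*k+1, h⟩ else 0 with hd
  have hcz : ∀ k, n ≤ k → c k = 0 := fun k hk => by rw [hc]; exact dif_neg (by omega)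
  have hdz : ∀ k, n ≤ k → d k = 0 := fun k hk => by rw [hd]; exact dif_neg (by omega)
  have hsupp : ∀ k ∉ Finset.range n, c k ^ 2 + d k ^ 2 = 0 := by
    intro k hk
    rw [hcz k (by simpa using hk), hdz k (by simpa using hk)]
    ring
  refine ⟨c, d, summable_of_ne_finset_zero hsupp, ?_, ?_⟩
  · rw [tsum_eq_sum hsupp]
    set G : ℕ → ℝ := fun j => if h : j < 2*n then (v ⟨j, h⟩)^2 else 0 with hG
    have step1 : ∑ k ∈ Finset.range n, (c k ^ 2 + d k ^ 2)
        = ∑ k ∈ Finset.range n, (G (2*k) + G (2*k+1)) := by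
      refine Finset.sum_congr rfl (fun k hk => ?_)
      have hk' : k < n := Finset.mem_range.mp hk
      simp only [hG, hc, hd]
      rw [dif_pos (show 2*k < 2*n by omega), dif_pos (show 2*k+1 < 2*n by omega),
        dif_pos (show 2*k < 2*n by omega), dif_pos (show 2*k+1 < 2*n by omega)]
    have step2 : ∑ k ∈ Finset.range n, (G (2*k) + G (2*k+1))
        = ∑ j ∈ Finset.range (2*n), G j := (sum_range_two_mul G n).symm
    have step3 : ∑ j ∈ Finset.range (2*n), G j = ∑ i : Fin (2*n), (v i)^2 := by
      rw [← Fin.sum_univ_eq_sum_range G (2*n)]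
      exact Finset.sum_congr rfl (fun i _ => by simp only [hG]; rw [dif_pos i.isLt])
    rw [step1, step2, step3, euclid_sum_sq]
    calc ‖v‖^2 ≤ 1^2 := pow_le_pow_left₀ (norm_nonneg v) hv 2
      _ = 1 := one_pow 2
  · intro x
    have hterm : ∀ k ∉ Finset.range n, a ^ ((k : ℝ) / 2) *
        (c k * Real.cos ((b : ℝ) ^ k * π * (x : ℝ)) +
          d k * Real.sin ((b : ℝ) ^ k * π * (x : ℝ))) = 0 := by
      intro k hk
      rw [hcz k (by simpa using hk), hdz k (by simpa using hk)]
      ring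
    rw [tsum_eq_sum hterm]
    set H : ℕ → ℝ := fun j => if h : j < 2*n then
      (v ⟨j, h⟩ * wSc a n ⟨j, h⟩) * wTrig b n ⟨j, h⟩ (x : ℝ) else 0 with hH
    have step1 : (wPhi a b n v) x = ∑ j ∈ Finset.range (2*n), H j := by
      rw [← Fin.sum_univ_eq_sum_range H (2*n)]
      show ∑ i, (v i * wSc a n i) * wTrig b n i (x:ℝ) = _
      exact Finset.sum_congr rfl (fun i _ => by simp only [hH]; rw [dif_pos i.isLt])
    rw [step1, sum_range_two_mul H n]
    refine Finset.sum_congr rfl (fun k hk => ?_)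
    have hk' : k < n := Finset.mem_range.mp hk
    have h2k : 2*k < 2*n := by omega
    have h2k1 : 2*k+1 < 2*n := by omega
    have hm0 : (2*k) % 2 = 0 := by omega
    have hdv0 : (2*k) / 2 = k := by omega
    have hm1 : (2*k+1) % 2 = 1 := by omega
    have hdv1 : (2*k+1) / 2 = k := by omega
    have hck : c k = v ⟨2*k, h2k⟩ := by simp only [hc]; rw [dif_pos h2k]
    have hdk : d k = v ⟨2*k+1, h2k1⟩ := by simp only [hd]; rw [dif_pos h2k1]
    have e1 : H (2*k) = (v ⟨2*k, h2k⟩ * Real.sqrt a ^ k) * Real.cos ((b:ℝ)^k * π * (x:ℝ)) := by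
      simp only [hH, wSc, wTrig]
      rw [dif_pos h2k]
      norm_num [hm0, hdv0, Nat.cast_pow]
    have e2 : H (2*k+1) = (v ⟨2*k+1, h2k1⟩ * Real.sqrt a ^ k) * Real.sin ((b:ℝ)^k * π * (x:ℝ)) := by
      simp only [hH, wSc, wTrig]
      rw [dif_pos h2k1]
      norm_num [hm1, hdv1, Nat.cast_pow]
    rw [e1, e2, hck, hdk, rpow_half_eq a ha0 k]
    ring

end Aux2

/-- For `0 < a < 1`, `b : ℕ` with `a * b ≥ 1`, every `ε > 0` and every
`n ≥ 1`, the covering number of the unit RKHS ball in `C([-1,1])` satisfies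
`𝒞(ε, B_W) ≥ a^(n²/2) / (2ε²)^n`. -/
theorem weierstrass_coveringNumber_lower
    (a : ℝ) (b : ℕ) (ha0 : 0 < a) (ha1 : a < 1) (hab : 1 ≤ a * b)
    (ε : ℝ) (hε : 0 < ε) (n : ℕ) (hn : 1 ≤ n) :
    ENNReal.ofReal (a ^ (((n : ℝ) ^ 2) / 2) / (2 * ε ^ 2) ^ n) ≤
      (coveringNumber ε (weierstrassBall a b) : ℝ≥0∞) := by
  classical
  have hb2 : 2 ≤ b := by
    by_contra hb
    push_neg at hb
    interval_cases b
    · simp at hab; linarith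
    · simp at hab; linarith
  set S : Set ℕ∞ := {N : ℕ∞ | ∃ t : Finset C(Set.Icc (-1:ℝ) 1, ℝ), (t.card : ℕ∞) = N ∧
      weierstrassBall a b ⊆ ⋃ c ∈ t, Metric.closedBall c ε} with hS
  have hcn : coveringNumber ε (weierstrassBall a b) = sInf S := rfl
  have key : ∀ N ∈ S, ENNReal.ofReal (a ^ (((n : ℝ) ^ 2) / 2) / (2 * ε ^ 2) ^ n)
      ≤ (N : ℝ≥0∞) := by
    rintro N ⟨t, hcard, hcover⟩
    have hNcast : (N : ℝ≥0∞) = (t.card : ℝ≥0∞) := by rw [← hcard]; rfl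
    rw [hNcast]
    have hsub : (diagMap (2*n) (wSc a n)) '' Metric.closedBall 0 1 ⊆
        ⋃ f ∈ t, Metric.closedBall (wL b n f) (Real.sqrt 2 * ε) := by
      rintro w ⟨v, hv, rfl⟩
      have hv1 : ‖v‖ ≤ 1 := by rwa [Metric.mem_closedBall, dist_zero_right] at hv
      obtain ⟨f, hf, hball⟩ := Set.mem_iUnion₂.mp (hcover (wPhi_mem ha0 b n v hv1))
      refine Set.mem_iUnion₂.mpr ⟨f, hf, ?_⟩
      rw [Metric.mem_closedBall]
      have hrw : (diagMap (2*n) (wSc a n)) v = wL b n (wPhi a b n v) := (wL_wPhi hb2 a n v).symm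
      rw [hrw]
      calc dist (wL b n (wPhi a b n v)) (wL b n f) ≤ Real.sqrt 2 * dist (wPhi a b n v) f :=
            wL_dist hb2 n _ f
        _ ≤ Real.sqrt 2 * ε :=
            mul_le_mul_of_nonneg_left (Metric.mem_closedBall.mp hball) (Real.sqrt_nonneg 2)
    -- measure computations
    have hfr : Module.finrank ℝ (EuclideanSpace ℝ (Fin (2*n))) = 2*n := by simp
    have hprodpos : 0 ≤ ∏ i, wSc a n i :=
      Finset.prod_nonneg fun i _ => pow_nonneg (Real.sqrt_nonneg a) _
    have hr0 : (0:ℝ) ≤ Real.sqrt 2 * ε := by positivity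
    set volB := MeasureTheory.volume (Metric.closedBall (0:EuclideanSpace ℝ (Fin (2*n))) 1)
      with hvolB
    have hm1 : MeasureTheory.volume ((diagMap (2*n) (wSc a n)) '' Metric.closedBall 0 1)
        = ENNReal.ofReal (∏ i, wSc a n i) * volB := by
      rw [diag_image, abs_of_nonneg hprodpos]
    have hm3 : ∀ f ∈ t, MeasureTheory.volume (Metric.closedBall (wL b n f) (Real.sqrt 2 * ε))
        = ENNReal.ofReal ((Real.sqrt 2 * ε)^(2*n)) * volB := fun f _ => by
      rw [MeasureTheory.Measure.addHaar_closedBall' MeasureTheory.volume _ hr0, hfr]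
    have main : ENNReal.ofReal (∏ i, wSc a n i) * volB
        ≤ ((t.card : ℝ≥0∞) * ENNReal.ofReal ((Real.sqrt 2 * ε)^(2*n))) * volB := by
      calc ENNReal.ofReal (∏ i, wSc a n i) * volB
          = MeasureTheory.volume ((diagMap (2*n) (wSc a n)) '' Metric.closedBall 0 1) := hm1.symm
        _ ≤ MeasureTheory.volume (⋃ f ∈ t, Metric.closedBall (wL b n f) (Real.sqrt 2 * ε)) :=
            MeasureTheory.measure_mono hsub
        _ ≤ ∑ f ∈ t, MeasureTheory.volume (Metric.closedBall (wL b n f) (Real.sqrt 2 * ε)) :=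
            MeasureTheory.measure_biUnion_finset_le _ _
        _ = ∑ _f ∈ t, ENNReal.ofReal ((Real.sqrt 2 * ε)^(2*n)) * volB :=
            Finset.sum_congr rfl hm3
        _ = ((t.card : ℝ≥0∞) * ENNReal.ofReal ((Real.sqrt 2 * ε)^(2*n))) * volB := by
            rw [Finset.sum_const, nsmul_eq_mul, mul_assoc]
    have hvol0 : volB ≠ 0 := by
      refine ne_of_gt (lt_of_lt_of_le ?_ (MeasureTheory.measure_mono Metric.ball_subset_closedBall))
      exact Metric.measure_ball_pos MeasureTheory.volume 0 one_pos
    have hvolT : volB ≠ ⊤ := (MeasureTheory.measure_closedBall_lt_top).ne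
    have main2 : ENNReal.ofReal (∏ i, wSc a n i)
        ≤ (t.card : ℝ≥0∞) * ENNReal.ofReal ((Real.sqrt 2 * ε)^(2*n)) :=
      (ENNReal.mul_le_mul_iff_left hvol0 hvolT).mp main
    -- real arithmetic
    have hrpow : (Real.sqrt 2 * ε)^(2*n) = (2*ε^2)^n := by
      rw [pow_mul]
      congr 1
      rw [mul_pow, Real.sq_sqrt (by norm_num : (0:ℝ) ≤ 2)]
    have hP : ∏ i, wSc a n i = Real.sqrt a ^ (n*(n-1)) := by
      unfold wSc
      rw [Finset.prod_pow_eq_pow_sum]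
      congr 1
      rw [Fin.sum_univ_eq_sum_range (fun j => j / 2) (2*n)]
      exact sum_div2 n
    have hnum : a ^ (((n:ℝ)^2)/2) ≤ Real.sqrt a ^ (n*(n-1)) := by
      rw [← rpow_half_eq a ha0 (n*(n-1))]
      apply Real.rpow_le_rpow_of_exponent_ge ha0 ha1.le
      have hcast : ((n*(n-1) : ℕ) : ℝ) = (n:ℝ)^2 - n := by
        rw [Nat.cast_mul, Nat.cast_sub hn]
        push_cast
        ring
      rw [hcast]
      have : (0:ℝ) ≤ n := Nat.cast_nonneg n
      linarith
    have hdpos : (0:ℝ) < (2*ε^2)^n := by positivity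
    have final : ENNReal.ofReal (a ^ (((n : ℝ) ^ 2) / 2) / (2 * ε ^ 2) ^ n)
          * ENNReal.ofReal ((Real.sqrt 2 * ε)^(2*n))
        ≤ (t.card : ℝ≥0∞) * ENNReal.ofReal ((Real.sqrt 2 * ε)^(2*n)) := by
      refine le_trans ?_ main2
      rw [← ENNReal.ofReal_mul (by positivity)]
      apply ENNReal.ofReal_le_ofReal
      rw [hrpow, div_mul_cancel₀ _ (ne_of_gt hdpos), hP]
      exact hnum
    have hof0 : ENNReal.ofReal ((Real.sqrt 2 * ε)^(2*n)) ≠ 0 := by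
      rw [hrpow]
      exact (ENNReal.ofReal_pos.mpr hdpos).ne'
    exact (ENNReal.mul_le_mul_iff_left hof0 ENNReal.ofReal_ne_top).mp final
  rcases Set.eq_empty_or_nonempty S with hSe | hSne
  · rw [hcn, hSe, _root_.sInf_empty]
    exact le_top
  · rw [hcn]
    exact key _ (csInf_mem hSne)
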